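/- Let q ∈ ℂ with 0 < |q| < 1, let k be a positive integer, let λ be a partition, and let n be a natural number with n ≥ ℓ(λ). Then the family (q^{-k(λ'_i − i + 1)})_{i≥1} is summable, and ∑_{i=1}^∞ q^{-k(λ'_i − i + 1)} + ∑_{i=1}^n q^{k(λ_i − i)} = q^{-kn}/(1 − q^k). -/

import Mathlib

private lemma lower_eq_Iio (S : Set ℕ) (hfin : S.Finite)
    (hl : ∀ ⦃a b : ℕ⦄, a ≤ b → b ∈ S → a ∈ S) : S = Set.Iio S.ncard := by
  ext a
  simp only [Set.mem_Iio]
  constructor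
  · intro ha
    have hsub : Set.Iic a ⊆ S := fun b hb => hl hb ha
    have h1 := Set.ncard_le_ncard hsub hfin
    have h2 : (Set.Iic a).ncard = a + 1 := by
      rw [← Finset.coe_Iic, Set.ncard_coe_finset]; simp
    omega
  · intro ha
    by_contra hna
    have hsub : S ⊆ Set.Iio a := fun b hb => by
      by_contra hba
      exact hna (hl (le_of_not_gt hba) hb)
    have h1 := Set.ncard_le_ncard hsub (Set.finite_Iio a)
    have h2 : (Set.Iio a).ncard = a := by
      rw [← Finset.coe_Iio, Set.ncard_coe_finset]; simp
    omega

private lemma conj_mem (f : ℕ → ℕ) (hf : Antitone f) (n : ℕ) (hn : ∀ i, n ≤ i → f i = 0)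
    (c : ℕ) (hc : 0 < c) : ∀ i, c ≤ f i ↔ i < Set.ncard {j : ℕ | c ≤ f j} := by
  have hfin : {j : ℕ | c ≤ f j}.Finite := (Set.finite_Iio n).subset (fun j hj => by
    simp only [Set.mem_setOf_eq] at hj
    by_contra h
    rw [hn j (le_of_not_gt h)] at hj
    omega)
  have key := lower_eq_Iio _ hfin (fun a b hab hb => le_trans hb (hf hab))
  intro i
  simpa using Set.ext_iff.mp key i

private lemma zpow_shift (q : ℂ) (hq0 : q ≠ 0) (k : ℕ) (a : ℤ) :
    q ^ (a - (k : ℤ)) * q ^ (k : ℕ) = q ^ a := by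
  rw [← zpow_natCast q k, ← zpow_add₀ hq0]; ring_nf

private lemma geom_Ico (q : ℂ) (hq0 : q ≠ 0) (k : ℕ) :
    ∀ m n : ℕ, m ≤ n →
      (1 - q ^ k) * (∑ i ∈ Finset.Ico m n, q ^ (-(k : ℤ) * ((i : ℤ) + 1))) =
        q ^ (-(k : ℤ) * n) - q ^ (-(k : ℤ) * m) := by
  intro m n hmn
  induction n, hmn using Nat.le_induction with
  | base => simp
  | succ n hmn ih =>
    rw [Finset.sum_Ico_succ_top hmn, mul_add, ih]
    have h1 : q ^ (-(k : ℤ) * ((n : ℤ) + 1)) * q ^ k = q ^ (-(k : ℤ) * (n : ℤ)) := by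
      have := zpow_shift q hq0 k (-(k : ℤ) * (n : ℤ))
      rw [show -(k : ℤ) * (n : ℤ) - (k : ℤ) = -(k : ℤ) * ((n : ℤ) + 1) by ring] at this
      exact this
    push_cast
    linear_combination -h1

private lemma zero_fun_case (q : ℂ) (hq0 : q ≠ 0) (hq1 : ‖q‖ < 1)
    (k : ℕ) (hk : 0 < k) (f : ℕ → ℕ) (hzero : ∀ i, f i = 0) (n : ℕ) :
    Summable (fun i : ℕ =>
      q ^ (-(k : ℤ) * ((Set.ncard {j : ℕ | i + 1 ≤ f j} : ℤ) - i))) ∧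
    (∑' i : ℕ, q ^ (-(k : ℤ) * ((Set.ncard {j : ℕ | i + 1 ≤ f j} : ℤ) - i))) +
        (∑ i ∈ Finset.range n, q ^ ((k : ℤ) * ((f i : ℤ) - ((i : ℤ) + 1)))) =
      q ^ (-(k : ℤ) * n) / (1 - q ^ k) := by
  have hnorm : ‖q ^ k‖ < 1 := by
    rw [norm_pow]
    exact pow_lt_one₀ (norm_nonneg q) hq1 hk.ne'
  have hne : (1 : ℂ) - q ^ k ≠ 0 := by
    intro h
    have hq : q ^ k = 1 := by linear_combination -h
    rw [hq, norm_one] at hnorm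
    exact lt_irrefl 1 hnorm
  have hset : ∀ i : ℕ, {j : ℕ | i + 1 ≤ f j} = (∅ : Set ℕ) := by
    intro i; ext j; simp [hzero j]
  have hT : ∀ i : ℕ, q ^ (-(k : ℤ) * ((Set.ncard {j : ℕ | i + 1 ≤ f j} : ℤ) - i))
      = (q ^ k) ^ i := by
    intro i
    rw [hset i, Set.ncard_empty]
    rw [show (-(k : ℤ) * (((0 : ℕ) : ℤ) - i)) = ((k * i : ℕ) : ℤ) by push_cast; ring,
      zpow_natCast, pow_mul]
  have hsum : Summable (fun i : ℕ =>
      q ^ (-(k : ℤ) * ((Set.ncard {j : ℕ | i + 1 ≤ f j} : ℤ) - i))) := by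
    have := summable_geometric_of_norm_lt_one hnorm
    exact this.congr (fun i => (hT i).symm)
  refine ⟨hsum, ?_⟩
  have htsum : (∑' i : ℕ, q ^ (-(k : ℤ) * ((Set.ncard {j : ℕ | i + 1 ≤ f j} : ℤ) - i)))
      = (1 - q ^ k)⁻¹ := by
    rw [tsum_congr hT, tsum_geometric_of_norm_lt_one hnorm]
  rw [htsum]
  have hrow : ∀ i : ℕ, q ^ ((k : ℤ) * ((f i : ℤ) - ((i : ℤ) + 1)))
      = q ^ (-(k : ℤ) * ((i : ℤ) + 1)) := by
    intro i
    rw [hzero i, show ((k : ℤ) * (((0 : ℕ) : ℤ) - ((i : ℤ) + 1)))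
      = -(k : ℤ) * ((i : ℤ) + 1) by push_cast; ring]
  rw [Finset.sum_congr rfl (fun i _ => hrow i), Finset.range_eq_Ico]
  have hgeo := geom_Ico q hq0 k 0 n (Nat.zero_le n)
  have h0 : q ^ (-(k : ℤ) * ((0 : ℕ) : ℤ)) = 1 := by norm_num
  rw [h0] at hgeo
  rw [eq_div_iff hne, add_mul, inv_mul_cancel₀ hne]
  linear_combination hgeo

private lemma main_ind (q : ℂ) (hq0 : q ≠ 0) (hq1 : ‖q‖ < 1)
    (k : ℕ) (hk : 0 < k) :
    ∀ N : ℕ, ∀ f : ℕ → ℕ, Antitone f → f 0 ≤ N → ∀ n : ℕ, (∀ i, n ≤ i → f i = 0) →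
    Summable (fun i : ℕ =>
      q ^ (-(k : ℤ) * ((Set.ncard {j : ℕ | i + 1 ≤ f j} : ℤ) - i))) ∧
    (∑' i : ℕ, q ^ (-(k : ℤ) * ((Set.ncard {j : ℕ | i + 1 ≤ f j} : ℤ) - i))) +
        (∑ i ∈ Finset.range n, q ^ ((k : ℤ) * ((f i : ℤ) - ((i : ℤ) + 1)))) =
      q ^ (-(k : ℤ) * n) / (1 - q ^ k) := by
  have hnorm : ‖q ^ k‖ < 1 := by
    rw [norm_pow]
    exact pow_lt_one₀ (norm_nonneg q) hq1 hk.ne'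
  have hne : (1 : ℂ) - q ^ k ≠ 0 := by
    intro h
    have hq : q ^ k = 1 := by linear_combination -h
    rw [hq, norm_one] at hnorm
    exact lt_irrefl 1 hnorm
  intro N
  induction N with
  | zero =>
    intro f hf hf0 n hn
    exact zero_fun_case q hq0 hq1 k hk f
      (fun i => Nat.le_zero.mp ((hf (Nat.zero_le i)).trans hf0)) n
  | succ N ih =>
    intro f hf hf0 n hn
    by_cases h0 : f 0 = 0
    · exact zero_fun_case q hq0 hq1 k hk f
        (fun i => Nat.le_zero.mp ((hf (Nat.zero_le i)).trans h0.le)) n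
    · set g : ℕ → ℕ := fun i => f i - 1 with hg_def
      have hg : Antitone g := fun a b hab => Nat.sub_le_sub_right (hf hab) 1
      have hg0 : g 0 ≤ N := by
        have : f 0 ≤ N + 1 := hf0
        simp only [hg_def]
        omega
      have hgn : ∀ i, n ≤ i → g i = 0 := fun i hi => by
        simp only [hg_def, hn i hi]
      obtain ⟨Sg, Eg⟩ := ih g hg hg0 n hgn
      set m := Set.ncard {j : ℕ | 1 ≤ f j} with hm_def
      have hm : ∀ i, 1 ≤ f i ↔ i < m := conj_mem f hf n hn 1 one_pos
      have hmn : m ≤ n := by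
        by_contra h
        push_neg at h
        have h1 := (hm n).mpr h
        have h2 := hn n le_rfl
        omega
      have hshift : ∀ i : ℕ, {j : ℕ | i + 1 + 1 ≤ f j} = {j : ℕ | i + 1 ≤ g j} := by
        intro i
        ext j
        simp only [Set.mem_setOf_eq, hg_def]
        omega
      have hterm : ∀ i : ℕ,
          q ^ (-(k : ℤ) * ((Set.ncard {j : ℕ | i + 1 + 1 ≤ f j} : ℤ) - ((i : ℤ) + 1)))
          = q ^ k * q ^ (-(k : ℤ) * ((Set.ncard {j : ℕ | i + 1 ≤ g j} : ℤ) - i)) := by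
        intro i
        rw [hshift i,
          show (-(k : ℤ) * ((Set.ncard {j : ℕ | i + 1 ≤ g j} : ℤ) - ((i : ℤ) + 1)))
            = (k : ℤ) + (-(k : ℤ) * ((Set.ncard {j : ℕ | i + 1 ≤ g j} : ℤ) - i)) by ring,
          zpow_add₀ hq0, zpow_natCast]
      have hfun : (fun i : ℕ =>
          q ^ (-(k : ℤ) * ((Set.ncard {j : ℕ | (i + 1) + 1 ≤ f j} : ℤ) - ((i + 1 : ℕ) : ℤ))))
          = fun i : ℕ => q ^ k *
            q ^ (-(k : ℤ) * ((Set.ncard {j : ℕ | i + 1 ≤ g j} : ℤ) - i)) := by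
        funext i
        push_cast
        exact hterm i
      have Sf : Summable (fun i : ℕ =>
          q ^ (-(k : ℤ) * ((Set.ncard {j : ℕ | i + 1 ≤ f j} : ℤ) - i))) := by
        rw [← summable_nat_add_iff 1]
        exact hfun ▸ (Sg.mul_left (q ^ k))
      refine ⟨Sf, ?_⟩
      have hT0 : q ^ (-(k : ℤ) * ((Set.ncard {j : ℕ | 0 + 1 ≤ f j} : ℤ) - ((0 : ℕ) : ℤ)))
          = q ^ (-(k : ℤ) * (m : ℤ)) := by
        norm_num [hm_def]
      have htsum : (∑' i : ℕ,
          q ^ (-(k : ℤ) * ((Set.ncard {j : ℕ | i + 1 ≤ f j} : ℤ) - i)))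
          = q ^ (-(k : ℤ) * (m : ℤ)) + q ^ k * (∑' i : ℕ,
            q ^ (-(k : ℤ) * ((Set.ncard {j : ℕ | i + 1 ≤ g j} : ℤ) - i))) := by
        rw [Summable.tsum_eq_zero_add Sf, hT0, hfun, tsum_mul_left]
      rw [htsum]
      -- now handle the row sums
      have hrow_f : ∀ i ∈ Finset.Ico 0 m,
          q ^ ((k : ℤ) * ((f i : ℤ) - ((i : ℤ) + 1)))
          = q ^ k * q ^ ((k : ℤ) * ((g i : ℤ) - ((i : ℤ) + 1))) := by
        intro i hi
        simp only [Finset.mem_Ico] at hi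
        have hfi : f i = g i + 1 := by
          have := (hm i).mpr hi.2
          simp only [hg_def]
          omega
        rw [hfi,
          show ((k : ℤ) * (((g i + 1 : ℕ) : ℤ) - ((i : ℤ) + 1)))
            = (k : ℤ) + ((k : ℤ) * ((g i : ℤ) - ((i : ℤ) + 1))) by push_cast; ring,
          zpow_add₀ hq0, zpow_natCast]
      have hrow_f2 : ∀ i ∈ Finset.Ico m n,
          q ^ ((k : ℤ) * ((f i : ℤ) - ((i : ℤ) + 1)))
          = q ^ (-(k : ℤ) * ((i : ℤ) + 1)) := by
        intro i hi
        simp only [Finset.mem_Ico] at hi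
        have hfi : f i = 0 := by
          rcases Nat.eq_zero_or_pos (f i) with h | h
          · exact h
          · exact absurd ((hm i).mp h) (by omega)
        rw [hfi, show ((k : ℤ) * (((0 : ℕ) : ℤ) - ((i : ℤ) + 1)))
          = -(k : ℤ) * ((i : ℤ) + 1) by push_cast; ring]
      have hrow_g2 : ∀ i ∈ Finset.Ico m n,
          q ^ ((k : ℤ) * ((g i : ℤ) - ((i : ℤ) + 1)))
          = q ^ (-(k : ℤ) * ((i : ℤ) + 1)) := by
        intro i hi
        simp only [Finset.mem_Ico] at hi
        have hfi : g i = 0 := by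
          simp only [hg_def]
          rcases Nat.eq_zero_or_pos (f i) with h | h
          · omega
          · exact absurd ((hm i).mp h) (by omega)
        rw [hfi, show ((k : ℤ) * (((0 : ℕ) : ℤ) - ((i : ℤ) + 1)))
          = -(k : ℤ) * ((i : ℤ) + 1) by push_cast; ring]
      have hsplit_f : (∑ i ∈ Finset.range n, q ^ ((k : ℤ) * ((f i : ℤ) - ((i : ℤ) + 1))))
          = q ^ k * (∑ i ∈ Finset.Ico 0 m, q ^ ((k : ℤ) * ((g i : ℤ) - ((i : ℤ) + 1))))
            + (∑ i ∈ Finset.Ico m n, q ^ (-(k : ℤ) * ((i : ℤ) + 1))) := by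
        rw [Finset.range_eq_Ico, ← Finset.sum_Ico_consecutive _ (Nat.zero_le m) hmn,
          Finset.sum_congr rfl hrow_f, Finset.sum_congr rfl hrow_f2, Finset.mul_sum]
      have hsplit_g : (∑ i ∈ Finset.range n, q ^ ((k : ℤ) * ((g i : ℤ) - ((i : ℤ) + 1))))
          = (∑ i ∈ Finset.Ico 0 m, q ^ ((k : ℤ) * ((g i : ℤ) - ((i : ℤ) + 1))))
            + (∑ i ∈ Finset.Ico m n, q ^ (-(k : ℤ) * ((i : ℤ) + 1))) := by
        rw [Finset.range_eq_Ico, ← Finset.sum_Ico_consecutive _ (Nat.zero_le m) hmn,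
          Finset.sum_congr rfl hrow_g2]
      rw [hsplit_f]
      rw [hsplit_g] at Eg
      have hgeo := geom_Ico q hq0 k m n hmn
      have hG : q ^ (-(k : ℤ) * (n : ℤ)) / (1 - q ^ k) * (1 - q ^ k)
          = q ^ (-(k : ℤ) * (n : ℤ)) := div_mul_cancel₀ _ hne
      linear_combination (q ^ k) * Eg + hgeo - hG

/-- A partition is encoded as `f : ℕ → ℕ` with `f i = λ_{i+1}` (0-based index),
required to be antitone; `hn : ∀ i, n ≤ i → f i = 0` says `n ≥ ℓ(λ)`.
The conjugate partition is `λ'_{i+1} = Set.ncard {j : ℕ | i + 1 ≤ f j}`.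

STATEMENT 1: for `0 < |q| < 1` and `k ≥ 1`, the family
`(q^{-k(λ'_i − i + 1)})_{i ≥ 1}`, i.e.
`fun i : ℕ => q ^ (-(k:ℤ) * ((λ'_{i+1} : ℤ) - i))`, is summable, and
`∑_{i=1}^∞ q^{-k(λ'_i − i + 1)} + ∑_{i=1}^n q^{k(λ_i − i)} = q^{-kn}/(1 − q^k)`. -/
theorem closed_topological_vertex_conjugate_partition_sum
    (q : ℂ) (hq0 : 0 < ‖q‖) (hq1 : ‖q‖ < 1)
    (k : ℕ) (hk : 0 < k)
    (f : ℕ → ℕ) (hf : Antitone f) (n : ℕ) (hn : ∀ i, n ≤ i → f i = 0) :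
    Summable (fun i : ℕ =>
      q ^ (-(k : ℤ) * ((Set.ncard {j : ℕ | i + 1 ≤ f j} : ℤ) - i))) ∧
    (∑' i : ℕ, q ^ (-(k : ℤ) * ((Set.ncard {j : ℕ | i + 1 ≤ f j} : ℤ) - i))) +
        (∑ i ∈ Finset.range n, q ^ ((k : ℤ) * ((f i : ℤ) - ((i : ℤ) + 1)))) =
      q ^ (-(k : ℤ) * n) / (1 - q ^ k) := by
  have hqne : q ≠ 0 := by
    intro h
    rw [h, norm_zero] at hq0
    exact lt_irrefl 0 hq0
  exact main_ind q hqne hq1 k hk (f 0) f hf le_rfl n hn
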